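/- arXiv:0707.1175 — 3 statements merged into one kernel-verified Lean document; each statement's English description precedes it below -/
import Mathlib

section
/- Let A be a ring and let (a, b, a', b') be a cross on an A-module E with outer terms (X, Y, M, N), i.e. 0 → N →a E →b M → 0 and 0 → Y →a' E →b' X → 0 are short exact sequences. Then the stabilizer {g ∈ Aut_A(E) : g∘a = a, b∘g = b, g∘a' = a', b'∘g = b'} equals the set {id_E + a'∘f∘b' : f ∈ Hom_A(X, Y) with (b∘a')∘f = 0 and f∘(b'∘a) = 0}. Moreover, the map sending h ∈ Hom_A(coker(b'∘a), ker(b∘a')) to id_E + a'∘ι∘h∘π∘b', where π : X → coker(b'∘a) = X/range(b'∘a) is the projection and ι : ker(b∘a') → Y is the inclusion, is a bijection from Hom_A(coker(b'∘a), ker(b∘a')) onto this stabilizer. -/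
/-- The stabilizer of a cross `(a, b, a', b')` on `E` with outer terms
`(X, Y, M, N)` consists of the automorphisms `id_E + a'∘f∘b'` with
`(b∘a')∘f = 0` and `f∘(b'∘a) = 0`, and it is in bijection with
`Hom_A(coker(b'∘a), ker(b∘a'))`. -/
theorem stabilizer_of_cross
    (A E X Y M N : Type*) [Ring A] [AddCommGroup E] [Module A E]
    [AddCommGroup X] [Module A X] [AddCommGroup Y] [Module A Y]
    [AddCommGroup M] [Module A M] [AddCommGroup N] [Module A N]
    (a : N →ₗ[A] E) (b : E →ₗ[A] M) (a' : Y →ₗ[A] E) (b' : E →ₗ[A] X)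
    (ha : Function.Injective a) (hb : Function.Surjective b)
    (hab : LinearMap.range a = LinearMap.ker b)
    (ha' : Function.Injective a') (hb' : Function.Surjective b')
    (hab' : LinearMap.range a' = LinearMap.ker b') :
    ({g : E ≃ₗ[A] E |
        (g : E →ₗ[A] E) ∘ₗ a = a ∧ b ∘ₗ (g : E →ₗ[A] E) = b ∧
        (g : E →ₗ[A] E) ∘ₗ a' = a' ∧ b' ∘ₗ (g : E →ₗ[A] E) = b'} =
      {g : E ≃ₗ[A] E | ∃ f : X →ₗ[A] Y,
        (b ∘ₗ a') ∘ₗ f = 0 ∧ f ∘ₗ (b' ∘ₗ a) = 0 ∧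
        (g : E →ₗ[A] E) = LinearMap.id + a' ∘ₗ f ∘ₗ b'}) ∧
    ∃ e : ((X ⧸ LinearMap.range (b' ∘ₗ a)) →ₗ[A] ↥(LinearMap.ker (b ∘ₗ a'))) ≃
        {g : E ≃ₗ[A] E //
          (g : E →ₗ[A] E) ∘ₗ a = a ∧ b ∘ₗ (g : E →ₗ[A] E) = b ∧
          (g : E →ₗ[A] E) ∘ₗ a' = a' ∧ b' ∘ₗ (g : E →ₗ[A] E) = b'},
      ∀ (h : (X ⧸ LinearMap.range (b' ∘ₗ a)) →ₗ[A] ↥(LinearMap.ker (b ∘ₗ a')))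
        (x : E),
        (e h).1 x =
          x + a' ((LinearMap.ker (b ∘ₗ a')).subtype
            (h (Submodule.Quotient.mk (b' x)))) := by
  classical
  have hb'a' : ∀ y : Y, b' (a' y) = 0 := by
    intro y
    have : a' y ∈ LinearMap.ker b' := hab' ▸ LinearMap.mem_range_self a' y
    simpa using this
  -- Extraction: every automorphism fixing the cross has the form `id + a'∘f∘b'`.
  have extract : ∀ g : E ≃ₗ[A] E,
      (g : E →ₗ[A] E) ∘ₗ a = a → b ∘ₗ (g : E →ₗ[A] E) = b →
      (g : E →ₗ[A] E) ∘ₗ a' = a' → b' ∘ₗ (g : E →ₗ[A] E) = b' →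
      ∃ f : X →ₗ[A] Y, (b ∘ₗ a') ∘ₗ f = 0 ∧ f ∘ₗ (b' ∘ₗ a) = 0 ∧
        (g : E →ₗ[A] E) = LinearMap.id + a' ∘ₗ f ∘ₗ b' := by
    intro g h1 h2 h3 h4
    set φ : E →ₗ[A] E := (g : E →ₗ[A] E) - LinearMap.id with hφdef
    have hφ : ∀ e : E, φ e = g e - e := fun e => rfl
    have hkerφ : LinearMap.ker b' ≤ LinearMap.ker φ := by
      intro e he
      rw [← hab'] at he
      obtain ⟨y, rfl⟩ := he
      have hy : g (a' y) = a' y := LinearMap.congr_fun h3 y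
      simp [LinearMap.mem_ker, hφ, hy]
    set ψ : X →ₗ[A] E :=
      (Submodule.liftQ (LinearMap.ker b') φ hkerφ) ∘ₗ
        (b'.quotKerEquivOfSurjective hb').symm.toLinearMap with hψdef
    have hψapp : ∀ e : E, ψ (b' e) = φ e := by
      intro e
      have : (b'.quotKerEquivOfSurjective hb').symm (b' e) =
          Submodule.Quotient.mk e := by
        apply (b'.quotKerEquivOfSurjective hb').injective
        simp [LinearMap.quotKerEquivOfSurjective]
      simp [ψ, this]
    have hmem : ∀ x : X, ψ x ∈ LinearMap.range a' := by
      intro x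
      obtain ⟨e, rfl⟩ := hb' x
      rw [hψapp, hab']
      have : b' (g e) = b' e := LinearMap.congr_fun h4 e
      simp [LinearMap.mem_ker, hφ, this]
    set f : X →ₗ[A] Y :=
      (LinearEquiv.ofInjective a' ha').symm.toLinearMap ∘ₗ
        LinearMap.codRestrict (LinearMap.range a') ψ hmem with hfdef
    have ha'f : ∀ x : X, a' (f x) = ψ x := by
      intro x
      show a' ((LinearEquiv.ofInjective a' ha').symm ⟨ψ x, hmem x⟩) = ψ x
      obtain ⟨y, hy⟩ := (LinearEquiv.ofInjective a' ha').surjective ⟨ψ x, hmem x⟩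
      rw [← hy, LinearEquiv.symm_apply_apply]
      have : ((LinearEquiv.ofInjective a' ha') y : E) = a' y := rfl
      rw [← this, hy]
    refine ⟨f, ?_, ?_, ?_⟩
    · ext x
      have : b (g _) = b _ := LinearMap.congr_fun h2 (Classical.choose (hb' x))
      obtain ⟨e, he⟩ := hb' x
      have hbg : b (g e) = b e := LinearMap.congr_fun h2 e
      simp only [LinearMap.comp_apply, LinearMap.zero_apply]
      rw [ha'f, ← he, hψapp, hφ, map_sub, hbg, sub_self]
    · ext n
      have hga : g (a n) = a n := LinearMap.congr_fun h1 n
      apply ha'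
      simp only [LinearMap.comp_apply, LinearMap.zero_apply, map_zero]
      rw [ha'f, hψapp, hφ, hga, sub_self]
    · ext e
      simp only [LinearMap.add_apply, LinearMap.id_apply, LinearMap.comp_apply]
      rw [ha'f, hψapp, hφ]
      abel
  -- Reverse direction: `id + a'∘f∘b'` fixes the cross.
  have hback : ∀ g : E ≃ₗ[A] E, ∀ f : X →ₗ[A] Y,
      (b ∘ₗ a') ∘ₗ f = 0 → f ∘ₗ (b' ∘ₗ a) = 0 →
      (g : E →ₗ[A] E) = LinearMap.id + a' ∘ₗ f ∘ₗ b' →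
      (g : E →ₗ[A] E) ∘ₗ a = a ∧ b ∘ₗ (g : E →ₗ[A] E) = b ∧
        (g : E →ₗ[A] E) ∘ₗ a' = a' ∧ b' ∘ₗ (g : E →ₗ[A] E) = b' := by
    intro g f hc1 hc2 hg
    refine ⟨?_, ?_, ?_, ?_⟩
    · ext n
      have := LinearMap.congr_fun hc2 n
      simp only [LinearMap.comp_apply, LinearMap.zero_apply] at this
      simp [hg, this]
    · ext e
      have := LinearMap.congr_fun hc1 (b' e)
      simp only [LinearMap.comp_apply, LinearMap.zero_apply] at this
      simp [hg, this]
    · ext y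
      simp [hg, hb'a' y]
    · ext e
      simp [hg, hb'a']
  have hset : ({g : E ≃ₗ[A] E |
        (g : E →ₗ[A] E) ∘ₗ a = a ∧ b ∘ₗ (g : E →ₗ[A] E) = b ∧
        (g : E →ₗ[A] E) ∘ₗ a' = a' ∧ b' ∘ₗ (g : E →ₗ[A] E) = b'} =
      {g : E ≃ₗ[A] E | ∃ f : X →ₗ[A] Y,
        (b ∘ₗ a') ∘ₗ f = 0 ∧ f ∘ₗ (b' ∘ₗ a) = 0 ∧
        (g : E →ₗ[A] E) = LinearMap.id + a' ∘ₗ f ∘ₗ b'}) := by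
    ext g
    constructor
    · rintro ⟨h1, h2, h3, h4⟩
      exact extract g h1 h2 h3 h4
    · rintro ⟨f, hc1, hc2, hg⟩
      exact hback g f hc1 hc2 hg
  refine ⟨hset, ?_⟩
  -- The bijection with Hom(coker(b'∘a), ker(b∘a')).
  set K := LinearMap.ker (b ∘ₗ a') with hK
  set R := LinearMap.range (b' ∘ₗ a) with hR
  -- forward map
  have hu2 : ∀ h : (X ⧸ R) →ₗ[A] K,
      ∀ e : E, (a' ∘ₗ (K.subtype ∘ₗ h ∘ₗ R.mkQ) ∘ₗ b')
        ((a' ∘ₗ (K.subtype ∘ₗ h ∘ₗ R.mkQ) ∘ₗ b') e) = 0 := by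
    intro h e
    simp [hb'a']
  have hcond1 : ∀ h : (X ⧸ R) →ₗ[A] K,
      (b ∘ₗ a') ∘ₗ (K.subtype ∘ₗ h ∘ₗ R.mkQ) = 0 := by
    intro h
    ext x
    have hm := (h (R.mkQ x)).2
    rw [LinearMap.mem_ker, LinearMap.comp_apply] at hm
    simpa using hm
  have hcond2 : ∀ h : (X ⧸ R) →ₗ[A] K,
      (K.subtype ∘ₗ h ∘ₗ R.mkQ) ∘ₗ (b' ∘ₗ a) = 0 := by
    intro h
    ext n
    have : R.mkQ (b' (a n)) = 0 := by
      rw [Submodule.mkQ_apply, Submodule.Quotient.mk_eq_zero]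
      exact ⟨n, rfl⟩
    simp [this]
  set F : ((X ⧸ R) →ₗ[A] K) → (E ≃ₗ[A] E) := fun h =>
    LinearEquiv.ofLinear
      (LinearMap.id + a' ∘ₗ (K.subtype ∘ₗ h ∘ₗ R.mkQ) ∘ₗ b')
      (LinearMap.id - a' ∘ₗ (K.subtype ∘ₗ h ∘ₗ R.mkQ) ∘ₗ b')
      (by
        ext e
        simp only [LinearMap.comp_apply, LinearMap.add_apply, LinearMap.sub_apply,
          LinearMap.id_apply, map_sub]
        have := hu2 h e
        simp only [LinearMap.comp_apply] at this
        rw [this]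
        abel)
      (by
        ext e
        simp only [LinearMap.comp_apply, LinearMap.add_apply, LinearMap.sub_apply,
          LinearMap.id_apply, map_add]
        have := hu2 h e
        simp only [LinearMap.comp_apply] at this
        rw [this]
        abel)
    with hFdef
  have hFcoe : ∀ h, (F h : E →ₗ[A] E) =
      LinearMap.id + a' ∘ₗ (K.subtype ∘ₗ h ∘ₗ R.mkQ) ∘ₗ b' := fun h => rfl
  have hFmem : ∀ h : (X ⧸ R) →ₗ[A] K,
      (F h : E →ₗ[A] E) ∘ₗ a = a ∧ b ∘ₗ (F h : E →ₗ[A] E) = b ∧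
      (F h : E →ₗ[A] E) ∘ₗ a' = a' ∧ b' ∘ₗ (F h : E →ₗ[A] E) = b' :=
    fun h => hback (F h) _ (hcond1 h) (hcond2 h) (hFcoe h)
  set F' : ((X ⧸ R) →ₗ[A] K) →
      {g : E ≃ₗ[A] E //
        (g : E →ₗ[A] E) ∘ₗ a = a ∧ b ∘ₗ (g : E →ₗ[A] E) = b ∧
        (g : E →ₗ[A] E) ∘ₗ a' = a' ∧ b' ∘ₗ (g : E →ₗ[A] E) = b'} :=
    fun h => ⟨F h, hFmem h⟩ with hF'def
  have hinj : Function.Injective F' := by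
    intro h1 h2 heq
    have hcoe : (F h1 : E →ₗ[A] E) = (F h2 : E →ₗ[A] E) := by
      have : F h1 = F h2 := congrArg Subtype.val heq
      rw [this]
    rw [hFcoe, hFcoe] at hcoe
    have hu : a' ∘ₗ (K.subtype ∘ₗ h1 ∘ₗ R.mkQ) ∘ₗ b' =
        a' ∘ₗ (K.subtype ∘ₗ h2 ∘ₗ R.mkQ) ∘ₗ b' := by
      exact add_left_cancel hcoe
    refine LinearMap.ext fun q => ?_
    obtain ⟨x, rfl⟩ := Submodule.mkQ_surjective R q
    obtain ⟨e, rfl⟩ := hb' x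
    have heq2 := LinearMap.congr_fun hu e
    simp only [LinearMap.comp_apply] at heq2
    exact Subtype.ext (ha' heq2)
  have hsurj : Function.Surjective F' := by
    rintro ⟨g, h1, h2, h3, h4⟩
    obtain ⟨f, hc1, hc2, hg⟩ := extract g h1 h2 h3 h4
    have hmemK : ∀ x : X, f x ∈ K := by
      intro x
      have := LinearMap.congr_fun hc1 x
      simpa [hK, LinearMap.mem_ker] using this
    have hle : R ≤ LinearMap.ker (LinearMap.codRestrict K f hmemK) := by
      rintro x ⟨n, rfl⟩
      have := LinearMap.congr_fun hc2 n
      simp only [LinearMap.comp_apply, LinearMap.zero_apply] at this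
      simp only [LinearMap.mem_ker, LinearMap.comp_apply]
      exact Subtype.ext (by simpa using this)
    refine ⟨Submodule.liftQ R (LinearMap.codRestrict K f hmemK) hle, ?_⟩
    apply Subtype.ext
    apply LinearEquiv.toLinearMap_injective
    rw [hFcoe, hg]
    refine LinearMap.ext fun e => ?_
    simp [Submodule.liftQ_apply]
  refine ⟨Equiv.ofBijective F' ⟨hinj, hsurj⟩, ?_⟩
  intro h x
  rfl
end

section
/- Let A be a ring and let (a, b, a', b') be a cross on an A-module E with outer terms (X, Y, M, N), i.e. 0 → N →a E →b M → 0 and 0 → Y →a' E →b' X → 0 are short exact sequences. Set D = ker(b'∘a : N → X) and B = range(b∘a' : Y → M). Then: (i) for every n ∈ D there is a unique element e₁(n) ∈ Y with a'(e₁(n)) = a(n), and the resulting map e₁ : D → Y is an injective A-module homomorphism; (ii) the corestriction e₂ : Y → B of b∘a' is surjective and ker e₂ = range e₁, so 0 → D →e₁ Y →e₂ B → 0 is exact; (iii) b'∘a induces an injective A-module homomorphism e₃ : N/D → X, the assignment e₄(x) = b(e) + B for any e ∈ E with b'(e) = x gives a well-defined surjective A-module homomorphism e₄ : X → M/B, and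 ker e₄ = range e₃, so 0 → N/D →e₃ X →e₄ M/B → 0 is exact. -/
/-- A cross `(a, b, a', b')` on `E` with outer terms `(X, Y, M, N)` induces,
with `D = ker(b'∘a)` and `B = range(b∘a')`, two short exact sequences
`0 → D →e₁ Y →e₂ B → 0` and `0 → N/D →e₃ X →e₄ M/B → 0`, where
`a'∘e₁ = a|_D`, `e₂` is the corestriction of `b∘a'`, `e₃` is induced by
`b'∘a`, and `e₄(b'(e)) = b(e) + B`. -/
theorem cross_induces_exact_rows
    (A E X Y M N : Type*) [Ring A] [AddCommGroup E] [Module A E]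
    [AddCommGroup X] [Module A X] [AddCommGroup Y] [Module A Y]
    [AddCommGroup M] [Module A M] [AddCommGroup N] [Module A N]
    (a : N →ₗ[A] E) (b : E →ₗ[A] M) (a' : Y →ₗ[A] E) (b' : E →ₗ[A] X)
    (ha : Function.Injective a) (hb : Function.Surjective b)
    (hab : LinearMap.range a = LinearMap.ker b)
    (ha' : Function.Injective a') (hb' : Function.Surjective b')
    (hab' : LinearMap.range a' = LinearMap.ker b') :
    ∃ (e₁ : ↥(LinearMap.ker (b' ∘ₗ a)) →ₗ[A] Y)
      (e₂ : Y →ₗ[A] ↥(LinearMap.range (b ∘ₗ a')))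
      (e₃ : (N ⧸ LinearMap.ker (b' ∘ₗ a)) →ₗ[A] X)
      (e₄ : X →ₗ[A] (M ⧸ LinearMap.range (b ∘ₗ a'))),
      -- (i) e₁ is the unique lift of a|_D through a', and is injective
      (∀ n : ↥(LinearMap.ker (b' ∘ₗ a)), a' (e₁ n) = a (n : N)) ∧
      (∀ (n : ↥(LinearMap.ker (b' ∘ₗ a))) (y : Y), a' y = a (n : N) → y = e₁ n) ∧
      Function.Injective e₁ ∧
      -- (ii) e₂ is the corestriction of b∘a', surjective, with ker e₂ = range e₁
      (∀ y : Y, ((e₂ y : M) = b (a' y))) ∧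
      Function.Surjective e₂ ∧
      LinearMap.ker e₂ = LinearMap.range e₁ ∧
      -- (iii) e₃ induced by b'∘a is injective; e₄ is well defined by
      --       e₄(b' e) = b e + B, surjective, with ker e₄ = range e₃
      (∀ n : N, e₃ (Submodule.Quotient.mk n) = b' (a n)) ∧
      Function.Injective e₃ ∧
      (∀ x : E, e₄ (b' x) = Submodule.Quotient.mk (b x)) ∧
      Function.Surjective e₄ ∧
      LinearMap.ker e₄ = LinearMap.range e₃ := by
  classical
  set D := LinearMap.ker (b' ∘ₗ a) with hD
  set B := LinearMap.range (b ∘ₗ a') with hB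
  -- e₁
  have hmem : ∀ n : ↥D, a (n : N) ∈ LinearMap.range a' := by
    intro n
    rw [hab']
    exact n.2
  let f : ↥D →ₗ[A] ↥(LinearMap.range a') :=
    LinearMap.codRestrict _ (a ∘ₗ D.subtype) (fun n => hmem n)
  let e₁ : ↥D →ₗ[A] Y :=
    ((LinearEquiv.ofInjective a' ha').symm : ↥(LinearMap.range a') →ₗ[A] Y) ∘ₗ f
  have he₁ : ∀ n : ↥D, a' (e₁ n) = a (n : N) := by
    intro n
    have hz : ((LinearEquiv.ofInjective a' ha') ((LinearEquiv.ofInjective a' ha').symm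
        ⟨a (n : N), hmem n⟩) : E) = a (n : N) := by
      rw [(LinearEquiv.ofInjective a' ha').apply_symm_apply]
    rw [LinearEquiv.ofInjective_apply] at hz
    exact hz
  have huniq : ∀ (n : ↥D) (y : Y), a' y = a (n : N) → y = e₁ n := by
    intro n y hy
    exact ha' (by rw [hy, he₁])
  have hinj₁ : Function.Injective e₁ := by
    intro n m h
    have : a (n : N) = a (m : N) := by rw [← he₁, ← he₁, h]
    exact Subtype.ext (ha this)
  -- e₂
  let e₂ : Y →ₗ[A] ↥B := (b ∘ₗ a').rangeRestrict
  have he₂ : ∀ y : Y, ((e₂ y : M) = b (a' y)) := fun y => rfl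
  have hsurj₂ : Function.Surjective e₂ := (b ∘ₗ a').surjective_rangeRestrict
  have hker₂ : LinearMap.ker e₂ = LinearMap.range e₁ := by
    ext y
    constructor
    · intro hy
      have hy' : b (a' y) = 0 := by
        have := congrArg Subtype.val hy
        simpa [e₂] using this
      have : a' y ∈ LinearMap.ker b := hy'
      rw [← hab] at this
      obtain ⟨n, hn⟩ := this
      have hnD : n ∈ D := by
        have : b' (a n) = 0 := by
          rw [hn, ← LinearMap.mem_ker, ← hab']
          exact ⟨y, rfl⟩
        simpa [hD, LinearMap.mem_ker] using this
      exact ⟨⟨n, hnD⟩, (huniq ⟨n, hnD⟩ y hn.symm).symm⟩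
    · rintro ⟨n, rfl⟩
      have : b (a' (e₁ n)) = 0 := by
        rw [he₁]
        have : a (n : N) ∈ LinearMap.ker b := by rw [← hab]; exact ⟨n, rfl⟩
        exact this
      exact Subtype.ext (by simpa [e₂] using this)
  -- e₃
  let e₃ : (N ⧸ D) →ₗ[A] X := D.liftQ (b' ∘ₗ a) le_rfl
  have he₃ : ∀ n : N, e₃ (Submodule.Quotient.mk n) = b' (a n) := fun n => rfl
  have hinj₃ : Function.Injective e₃ := by
    rw [← LinearMap.ker_eq_bot]
    exact Submodule.ker_liftQ_eq_bot D _ le_rfl le_rfl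
  -- e₄
  have hgk : LinearMap.ker b' ≤ LinearMap.ker (B.mkQ ∘ₗ b) := by
    rw [← hab']
    rintro x ⟨y, rfl⟩
    simp only [LinearMap.mem_ker, LinearMap.comp_apply, Submodule.mkQ_apply,
      Submodule.Quotient.mk_eq_zero]
    exact ⟨y, rfl⟩
  let eb : (E ⧸ LinearMap.ker b') →ₗ[A] X := (LinearMap.ker b').liftQ b' le_rfl
  have hebinj : Function.Injective eb := by
    rw [← LinearMap.ker_eq_bot]
    exact Submodule.ker_liftQ_eq_bot _ _ le_rfl le_rfl
  have hebsurj : Function.Surjective eb := fun x => by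
    obtain ⟨e, rfl⟩ := hb' x
    exact ⟨Submodule.Quotient.mk e, rfl⟩
  let ebe : (E ⧸ LinearMap.ker b') ≃ₗ[A] X := LinearEquiv.ofBijective eb ⟨hebinj, hebsurj⟩
  let e₄ : X →ₗ[A] (M ⧸ B) :=
    ((LinearMap.ker b').liftQ (B.mkQ ∘ₗ b) hgk) ∘ₗ (ebe.symm : X →ₗ[A] (E ⧸ LinearMap.ker b'))
  have he₄ : ∀ x : E, e₄ (b' x) = Submodule.Quotient.mk (b x) := by
    intro x
    have h1 : ebe (Submodule.Quotient.mk x) = b' x := rfl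
    have h2 : ebe.symm (b' x) = Submodule.Quotient.mk x := by
      rw [← h1, LinearEquiv.symm_apply_apply]
    simp only [e₄, LinearMap.comp_apply, LinearEquiv.coe_coe, h2]
    rfl
  have hsurj₄ : Function.Surjective e₄ := by
    intro m
    obtain ⟨m, rfl⟩ := Submodule.Quotient.mk_surjective _ m
    obtain ⟨e, rfl⟩ := hb m
    exact ⟨b' e, he₄ e⟩
  have hker₄ : LinearMap.ker e₄ = LinearMap.range e₃ := by
    ext x
    constructor
    · intro hx
      obtain ⟨e, rfl⟩ := hb' x
      have : Submodule.Quotient.mk (b e) = (0 : M ⧸ B) := by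
        rw [← he₄]; exact hx
      rw [Submodule.Quotient.mk_eq_zero] at this
      obtain ⟨y, hy⟩ := this
      have : b (e - a' y) = 0 := by
        simp only [map_sub, sub_eq_zero]
        exact hy.symm ▸ rfl
      have : e - a' y ∈ LinearMap.ker b := this
      rw [← hab] at this
      obtain ⟨n, hn⟩ := this
      refine ⟨Submodule.Quotient.mk n, ?_⟩
      rw [he₃, hn, map_sub]
      have : b' (a' y) = 0 := by
        rw [← LinearMap.mem_ker, ← hab']; exact ⟨y, rfl⟩
      rw [this, sub_zero]
    · rintro ⟨n, rfl⟩
      obtain ⟨n, rfl⟩ := Submodule.Quotient.mk_surjective _ n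
      rw [LinearMap.mem_ker, he₃, he₄]
      rw [Submodule.Quotient.mk_eq_zero]
      have : b (a n) = 0 := by
        rw [← LinearMap.mem_ker, ← hab]; exact ⟨n, rfl⟩
      rw [this]
      exact Submodule.zero_mem _
  exact ⟨e₁, e₂, e₃, e₄, he₁, huniq, hinj₁, he₂, hsurj₂, hker₂, he₃, hinj₃, he₄, hsurj₄, hker₄⟩
end

section
/- Let k be a field, Λ a k-algebra, and (a, b, a', b') a cross on a Λ-module E with outer terms (X, Y, M, N), i.e. 0 → N →a E →b M → 0 and 0 → Y →a' E →b' X → 0 are short exact sequences. Let V = {g ∈ Aut_Λ(E) : g − id_E ∈ a∘Hom_Λ(M, N)∘b, and there exist g₁ ∈ Aut_Λ(X), g₂ ∈ Aut_Λ(Y) with g∘a' = a'∘g₂ and b'∘g = g₁∘b'}, and let Stab = {(g₁, g₂) ∈ Aut_Λ(X) × Aut_Λ(Y) : there exists g ∈ Aut_Λ(E) with g − id_E ∈ a∘Hom_Λ(M, N)∘b, g∘a' = a'∘g₂ and b'∘g = g₁∘b'}. Then: (i) V is a subgroup of Aut_Λ(E); (ii) for each g ∈ V the pair (g₁, g₂)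 is uniquely determined (since a' is injective and b' is surjective), and the resulting map Φ : V → Aut_Λ(X) × Aut_Λ(Y), g ↦ (g₁, g₂), is a group homomorphism with image exactly Stab; (iii) the kernel of Φ equals {id_E + a∘f∘b : f ∈ Hom_Λ(M, N) with f∘(b∘a') = 0 and (b'∘a)∘f = 0}, and this kernel is in bijection with Hom_Λ(coker(b∘a'), ker(b'∘a)) via the map sending h ∈ Hom_Λ(M/range(b∘a'), ker(b'∘a)) to id_E + a∘ι∘h∘π∘b, where π : M → M/range(b∘a') is the projection and ι : ker(b'∘a) → N the inclusion. -/
/-- For a cross `(a, b, a', b')` on `E` with outer terms `(X, Y, M, N)`, the set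
`V = {g ∈ Aut(E) : g - id ∈ a∘Hom(M,N)∘b, g∘a' = a'∘g₂, b'∘g = g₁∘b'}` is a
subgroup of `Aut(E)`, the assignment `g ↦ (g₁, g₂)` is a group homomorphism
`Φ : V → Aut(X) × Aut(Y)` with image the stabilizer `Stab`, and its kernel is
`{id + a∘f∘b : f∘(b∘a') = 0, (b'∘a)∘f = 0}`, which is in bijection with
`Hom(coker(b∘a'), ker(b'∘a))`. -/
theorem stabilizer_as_quotient_of_V
    (k Λ : Type*) [Field k] [Ring Λ] [Algebra k Λ]
    (E X Y M N : Type*) [AddCommGroup E] [Module Λ E]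
    [AddCommGroup X] [Module Λ X] [AddCommGroup Y] [Module Λ Y]
    [AddCommGroup M] [Module Λ M] [AddCommGroup N] [Module Λ N]
    (a : N →ₗ[Λ] E) (b : E →ₗ[Λ] M) (a' : Y →ₗ[Λ] E) (b' : E →ₗ[Λ] X)
    (ha : Function.Injective a) (hb : Function.Surjective b)
    (hab : LinearMap.range a = LinearMap.ker b)
    (ha' : Function.Injective a') (hb' : Function.Surjective b')
    (hab' : LinearMap.range a' = LinearMap.ker b') :
    ∃ H : Subgroup (E ≃ₗ[Λ] E),
      -- (i) V is a subgroup of Aut(E)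
      (H : Set (E ≃ₗ[Λ] E)) =
        {g : E ≃ₗ[Λ] E |
          (∃ f : M →ₗ[Λ] N, (g : E →ₗ[Λ] E) = LinearMap.id + a ∘ₗ f ∘ₗ b) ∧
          ∃ (g₁ : X ≃ₗ[Λ] X) (g₂ : Y ≃ₗ[Λ] Y),
            (g : E →ₗ[Λ] E) ∘ₗ a' = a' ∘ₗ (g₂ : Y →ₗ[Λ] Y) ∧
            b' ∘ₗ (g : E →ₗ[Λ] E) = (g₁ : X →ₗ[Λ] X) ∘ₗ b'} ∧
      -- (ii) g ↦ (g₁, g₂) is a well-defined group homomorphism onto Stab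
      ∃ Φ : H →* (X ≃ₗ[Λ] X) × (Y ≃ₗ[Λ] Y),
        (∀ g : H, ((g : E ≃ₗ[Λ] E) : E →ₗ[Λ] E) ∘ₗ a' =
            a' ∘ₗ ((Φ g).2 : Y →ₗ[Λ] Y) ∧
          b' ∘ₗ ((g : E ≃ₗ[Λ] E) : E →ₗ[Λ] E) = ((Φ g).1 : X →ₗ[Λ] X) ∘ₗ b') ∧
        Set.range Φ =
          {p : (X ≃ₗ[Λ] X) × (Y ≃ₗ[Λ] Y) | ∃ g : E ≃ₗ[Λ] E,
            (∃ f : M →ₗ[Λ] N, (g : E →ₗ[Λ] E) = LinearMap.id + a ∘ₗ f ∘ₗ b) ∧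
            (g : E →ₗ[Λ] E) ∘ₗ a' = a' ∘ₗ (p.2 : Y →ₗ[Λ] Y) ∧
            b' ∘ₗ (g : E →ₗ[Λ] E) = (p.1 : X →ₗ[Λ] X) ∘ₗ b'} ∧
        -- (iii) kernel description
        ((Φ.ker : Set H) = {g : H | ∃ f : M →ₗ[Λ] N,
            f ∘ₗ (b ∘ₗ a') = 0 ∧ (b' ∘ₗ a) ∘ₗ f = 0 ∧
            (((g : E ≃ₗ[Λ] E)) : E →ₗ[Λ] E) = LinearMap.id + a ∘ₗ f ∘ₗ b}) ∧
        -- and the kernel is in bijection with Hom(coker(b∘a'), ker(b'∘a))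
        ∃ e : ((M ⧸ LinearMap.range (b ∘ₗ a')) →ₗ[Λ] ↥(LinearMap.ker (b' ∘ₗ a)))
            ≃ Φ.ker,
          ∀ (h : (M ⧸ LinearMap.range (b ∘ₗ a')) →ₗ[Λ]
              ↥(LinearMap.ker (b' ∘ₗ a))) (x : E),
            ((e h : H) : E ≃ₗ[Λ] E) x =
              x + a ((LinearMap.ker (b' ∘ₗ a)).subtype
                (h (Submodule.Quotient.mk (b x)))) := by
  classical
  -- diagonal compositions vanish
  have hba0 : ∀ n : N, b (a n) = 0 := fun n => by
    have h1 : a n ∈ LinearMap.ker b := hab ▸ LinearMap.mem_range_self a n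
    simpa using h1
  -- key composition identity
  have hcomp : ∀ f f' : M →ₗ[Λ] N,
      (LinearMap.id + a ∘ₗ f ∘ₗ b) ∘ₗ (LinearMap.id + a ∘ₗ f' ∘ₗ b)
        = LinearMap.id + a ∘ₗ (f + f') ∘ₗ b := by
    intro f f'
    apply LinearMap.ext
    intro x
    simp only [LinearMap.comp_apply, LinearMap.add_apply, LinearMap.id_apply, map_add,
      hba0, map_zero, add_zero]
    abel
  -- the automorphism id + a∘f∘b
  let gE : (M →ₗ[Λ] N) → (E ≃ₗ[Λ] E) := fun f =>
    LinearEquiv.ofLinear (LinearMap.id + a ∘ₗ f ∘ₗ b) (LinearMap.id + a ∘ₗ (-f) ∘ₗ b)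
      (by rw [hcomp]; simp) (by rw [hcomp]; simp)
  have hgE : ∀ f, ((gE f : E ≃ₗ[Λ] E) : E →ₗ[Λ] E) = LinearMap.id + a ∘ₗ f ∘ₗ b :=
    fun f => rfl
  -- inverse computation
  have hinvcoe : ∀ (g : E ≃ₗ[Λ] E) (L : E →ₗ[Λ] E),
      (g : E →ₗ[Λ] E) ∘ₗ L = LinearMap.id → ((g⁻¹ : E ≃ₗ[Λ] E) : E →ₗ[Λ] E) = L := by
    intro g L h
    apply LinearMap.ext; intro x
    apply g.injective
    have h2 := LinearMap.congr_fun h x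
    simp only [LinearMap.comp_apply, LinearMap.id_apply, LinearEquiv.coe_coe] at h2
    rw [h2]
    show g (g.symm x) = x
    simp
  have hmulcoe : ∀ g h : E ≃ₗ[Λ] E,
      ((g * h : E ≃ₗ[Λ] E) : E →ₗ[Λ] E) = (g : E →ₗ[Λ] E) ∘ₗ (h : E →ₗ[Λ] E) :=
    fun g h => rfl
  have honecoe : ((1 : E ≃ₗ[Λ] E) : E →ₗ[Λ] E) = LinearMap.id := rfl
  -- uniqueness of g₁ and g₂
  have huniq1 : ∀ (L : E →ₗ[Λ] E) (g₁ g₁' : X ≃ₗ[Λ] X),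
      b' ∘ₗ L = (g₁ : X →ₗ[Λ] X) ∘ₗ b' → b' ∘ₗ L = (g₁' : X →ₗ[Λ] X) ∘ₗ b' →
      g₁ = g₁' := by
    intro L g₁ g₁' h1 h2
    apply LinearEquiv.toLinearMap_injective
    apply LinearMap.ext; intro x
    obtain ⟨e, rfl⟩ := hb' x
    have h3 := (LinearMap.congr_fun h1 e).symm.trans (LinearMap.congr_fun h2 e)
    simpa using h3
  have huniq2 : ∀ (L : E →ₗ[Λ] E) (g₂ g₂' : Y ≃ₗ[Λ] Y),
      L ∘ₗ a' = a' ∘ₗ (g₂ : Y →ₗ[Λ] Y) → L ∘ₗ a' = a' ∘ₗ (g₂' : Y →ₗ[Λ] Y) →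
      g₂ = g₂' := by
    intro L g₂ g₂' h1 h2
    apply LinearEquiv.toLinearMap_injective
    apply LinearMap.ext; intro y
    apply ha'
    have h3 := (LinearMap.congr_fun h1 y).symm.trans (LinearMap.congr_fun h2 y)
    simpa using h3
  -- the subgroup V
  have hone_mem : (1 : E ≃ₗ[Λ] E) ∈
      {g : E ≃ₗ[Λ] E |
        (∃ f : M →ₗ[Λ] N, (g : E →ₗ[Λ] E) = LinearMap.id + a ∘ₗ f ∘ₗ b) ∧
        ∃ (g₁ : X ≃ₗ[Λ] X) (g₂ : Y ≃ₗ[Λ] Y),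
          (g : E →ₗ[Λ] E) ∘ₗ a' = a' ∘ₗ (g₂ : Y →ₗ[Λ] Y) ∧
          b' ∘ₗ (g : E →ₗ[Λ] E) = (g₁ : X →ₗ[Λ] X) ∘ₗ b'} := by
    refine ⟨⟨0, by simp [honecoe]⟩, 1, 1, ?_, ?_⟩ <;>
    · rw [honecoe]
      apply LinearMap.ext; intro z; simp
  let H : Subgroup (E ≃ₗ[Λ] E) :=
    { carrier := {g : E ≃ₗ[Λ] E |
        (∃ f : M →ₗ[Λ] N, (g : E →ₗ[Λ] E) = LinearMap.id + a ∘ₗ f ∘ₗ b) ∧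
        ∃ (g₁ : X ≃ₗ[Λ] X) (g₂ : Y ≃ₗ[Λ] Y),
          (g : E →ₗ[Λ] E) ∘ₗ a' = a' ∘ₗ (g₂ : Y →ₗ[Λ] Y) ∧
          b' ∘ₗ (g : E →ₗ[Λ] E) = (g₁ : X →ₗ[Λ] X) ∘ₗ b'}
      one_mem' := hone_mem
      mul_mem' := by
        rintro g h ⟨⟨f, hf⟩, g₁, g₂, hg2, hg1⟩ ⟨⟨f', hf'⟩, h₁, h₂, hh2, hh1⟩
        refine ⟨⟨f + f', ?_⟩, g₁ * h₁, g₂ * h₂, ?_, ?_⟩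
        · rw [hmulcoe, hf, hf', hcomp]
        · rw [hmulcoe, LinearMap.comp_assoc, hh2, ← LinearMap.comp_assoc, hg2,
            LinearMap.comp_assoc]
          rfl
        · rw [hmulcoe, ← LinearMap.comp_assoc, hg1, LinearMap.comp_assoc, hh1,
            ← LinearMap.comp_assoc]
          rfl
      inv_mem' := by
        rintro g ⟨⟨f, hf⟩, g₁, g₂, hg2, hg1⟩
        have hginv : ((g⁻¹ : E ≃ₗ[Λ] E) : E →ₗ[Λ] E)
            = LinearMap.id + a ∘ₗ (-f) ∘ₗ b := by
          apply hinvcoe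
          rw [hf, hcomp]; simp
        refine ⟨⟨-f, hginv⟩, g₁⁻¹, g₂⁻¹, ?_, ?_⟩
        · apply LinearMap.ext; intro y
          apply g.injective
          have h1 : ∀ z : E, g ((g⁻¹ : E ≃ₗ[Λ] E) z) = z := fun z => by
            show g (g.symm z) = z; simp
          have h2 := LinearMap.congr_fun hg2 (g₂⁻¹ y)
          simp only [LinearMap.comp_apply, LinearEquiv.coe_coe] at h2 ⊢
          rw [h1, h2]
          show a' y = a' (g₂ (g₂.symm y))
          simp
        · apply LinearMap.ext; intro x
          apply g₁.injective
          have h1 : ∀ z : E, g ((g⁻¹ : E ≃ₗ[Λ] E) z) = z := fun z => by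
            show g (g.symm z) = z; simp
          have h2 := LinearMap.congr_fun hg1 ((g⁻¹ : E ≃ₗ[Λ] E) x)
          simp only [LinearMap.comp_apply, LinearEquiv.coe_coe] at h2 ⊢
          show g₁ (b' ((g⁻¹ : E ≃ₗ[Λ] E) x)) = g₁ (g₁.symm (b' x))
          rw [← h2, h1]
          simp }
  refine ⟨H, rfl, ?_⟩
  -- membership data
  have hmem : ∀ g : E ≃ₗ[Λ] E, g ∈ H ↔
      ((∃ f : M →ₗ[Λ] N, (g : E →ₗ[Λ] E) = LinearMap.id + a ∘ₗ f ∘ₗ b) ∧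
        ∃ (g₁ : X ≃ₗ[Λ] X) (g₂ : Y ≃ₗ[Λ] Y),
          (g : E →ₗ[Λ] E) ∘ₗ a' = a' ∘ₗ (g₂ : Y →ₗ[Λ] Y) ∧
          b' ∘ₗ (g : E →ₗ[Λ] E) = (g₁ : X →ₗ[Λ] X) ∘ₗ b') := fun g => Iff.rfl
  -- the pair (g₁, g₂) attached to g ∈ H
  let φ : H → (X ≃ₗ[Λ] X) × (Y ≃ₗ[Λ] Y) := fun g =>
    (((hmem g.1).mp g.2).2.choose, ((hmem g.1).mp g.2).2.choose_spec.choose)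
  have hφ : ∀ g : H,
      ((g : E ≃ₗ[Λ] E) : E →ₗ[Λ] E) ∘ₗ a' = a' ∘ₗ ((φ g).2 : Y →ₗ[Λ] Y) ∧
      b' ∘ₗ ((g : E ≃ₗ[Λ] E) : E →ₗ[Λ] E) = ((φ g).1 : X →ₗ[Λ] X) ∘ₗ b' :=
    fun g => ((hmem g.1).mp g.2).2.choose_spec.choose_spec
  have hφuniq : ∀ (g : H) (p : (X ≃ₗ[Λ] X) × (Y ≃ₗ[Λ] Y)),
      ((g : E ≃ₗ[Λ] E) : E →ₗ[Λ] E) ∘ₗ a' = a' ∘ₗ (p.2 : Y →ₗ[Λ] Y) →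
      b' ∘ₗ ((g : E ≃ₗ[Λ] E) : E →ₗ[Λ] E) = (p.1 : X →ₗ[Λ] X) ∘ₗ b' →
      φ g = p := by
    intro g p h2 h1
    have e1 := huniq1 _ _ _ (hφ g).2 h1
    have e2 := huniq2 _ _ _ (hφ g).1 h2
    exact Prod.ext e1 e2
  let Φ : H →* (X ≃ₗ[Λ] X) × (Y ≃ₗ[Λ] Y) :=
    { toFun := φ
      map_one' := by
        apply hφuniq
        · show ((1 : E ≃ₗ[Λ] E) : E →ₗ[Λ] E) ∘ₗ a'
            = a' ∘ₗ (((1 : (X ≃ₗ[Λ] X) × (Y ≃ₗ[Λ] Y)).2 : Y ≃ₗ[Λ] Y) : Y →ₗ[Λ] Y)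
          rw [honecoe]
          apply LinearMap.ext; intro z; simp
        · show b' ∘ₗ ((1 : E ≃ₗ[Λ] E) : E →ₗ[Λ] E)
            = (((1 : (X ≃ₗ[Λ] X) × (Y ≃ₗ[Λ] Y)).1 : X ≃ₗ[Λ] X) : X →ₗ[Λ] X) ∘ₗ b'
          rw [honecoe]
          apply LinearMap.ext; intro z; simp
      map_mul' := by
        intro g h
        apply hφuniq
        · show ((g.1 * h.1 : E ≃ₗ[Λ] E) : E →ₗ[Λ] E) ∘ₗ a'
            = a' ∘ₗ (((φ g).2 * (φ h).2 : Y ≃ₗ[Λ] Y) : Y →ₗ[Λ] Y)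
          rw [hmulcoe, LinearMap.comp_assoc, (hφ h).1, ← LinearMap.comp_assoc,
            (hφ g).1, LinearMap.comp_assoc]
          rfl
        · show b' ∘ₗ ((g.1 * h.1 : E ≃ₗ[Λ] E) : E →ₗ[Λ] E)
            = (((φ g).1 * (φ h).1 : X ≃ₗ[Λ] X) : X →ₗ[Λ] X) ∘ₗ b'
          rw [hmulcoe, ← LinearMap.comp_assoc, (hφ g).2, LinearMap.comp_assoc,
            (hφ h).2, ← LinearMap.comp_assoc]
          rfl }
  have hΦ : ∀ g : H, Φ g = φ g := fun g => rfl
  -- a map of the special shape with vanishing compositions lies over (1,1)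
  have hcancel : ∀ f f' : M →ₗ[Λ] N,
      LinearMap.id + a ∘ₗ f ∘ₗ b = LinearMap.id + a ∘ₗ f' ∘ₗ b → f = f' := by
    intro f f' hceq
    apply LinearMap.ext; intro m
    obtain ⟨x, rfl⟩ := hb m
    apply ha
    have h3 := LinearMap.congr_fun hceq x
    simp only [LinearMap.add_apply, LinearMap.comp_apply, LinearMap.id_apply] at h3
    exact add_left_cancel h3
  have hVofKer : ∀ f : M →ₗ[Λ] N, f ∘ₗ (b ∘ₗ a') = 0 → (b' ∘ₗ a) ∘ₗ f = 0 →
      ∀ g : E ≃ₗ[Λ] E, (g : E →ₗ[Λ] E) = LinearMap.id + a ∘ₗ f ∘ₗ b →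
      ((g : E →ₗ[Λ] E) ∘ₗ a' = a' ∘ₗ ((1 : Y ≃ₗ[Λ] Y) : Y →ₗ[Λ] Y) ∧
       b' ∘ₗ (g : E →ₗ[Λ] E) = ((1 : X ≃ₗ[Λ] X) : X →ₗ[Λ] X) ∘ₗ b') := by
    intro f hf1 hf2 g hf
    have hfba : ∀ y : Y, f (b (a' y)) = 0 := fun y => by
      have := LinearMap.congr_fun hf1 y
      simpa using this
    have hbaf : ∀ m : M, b' (a (f m)) = 0 := fun m => by
      have := LinearMap.congr_fun hf2 m
      simpa using this
    constructor
    · rw [hf]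
      apply LinearMap.ext; intro y
      simp [hfba y]
    · rw [hf]
      apply LinearMap.ext; intro x
      simp [hbaf (b x)]
  -- kernel characterization
  have hkerfwd : ∀ g : H, g ∈ Φ.ker → ∃ f : M →ₗ[Λ] N,
      f ∘ₗ (b ∘ₗ a') = 0 ∧ (b' ∘ₗ a) ∘ₗ f = 0 ∧
      (((g : E ≃ₗ[Λ] E)) : E →ₗ[Λ] E) = LinearMap.id + a ∘ₗ f ∘ₗ b := by
    intro g hg
    have hg1 : Φ g = 1 := hg
    obtain ⟨f, hf⟩ := ((hmem g.1).mp g.2).1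
    have h2 := (hφ g).1
    have h1 := (hφ g).2
    rw [hΦ] at hg1
    rw [hg1] at h2 h1
    refine ⟨f, ?_, ?_, hf⟩
    · apply LinearMap.ext; intro y
      apply ha
      have h3 := LinearMap.congr_fun h2 y
      rw [hf] at h3
      simp only [LinearMap.comp_apply, LinearMap.add_apply, LinearMap.id_apply] at h3 ⊢
      simp only [Prod.snd_one, LinearEquiv.coe_coe] at h3
      have h4 : a' y + a (f (b (a' y))) = a' y := by
        rw [h3]; show (a' ∘ₗ ((1 : Y ≃ₗ[Λ] Y) : Y →ₗ[Λ] Y)) y = a' y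
        apply congrArg; simp
      simpa using h4
    · apply LinearMap.ext; intro m
      obtain ⟨x, rfl⟩ := hb m
      have h3 := LinearMap.congr_fun h1 x
      rw [hf] at h3
      simp only [LinearMap.comp_apply, LinearMap.add_apply, LinearMap.id_apply,
        map_add, Prod.fst_one, LinearEquiv.coe_coe] at h3 ⊢
      have h4 : b' x + b' (a (f (b x))) = b' x := by
        rw [h3]; show ((1 : X ≃ₗ[Λ] X) : X →ₗ[Λ] X) (b' x) = b' x; simp
      have h5 := add_left_cancel (h4.trans (add_zero (b' x)).symm)
      simpa using h5
  have hkerbwd : ∀ g : H, (∃ f : M →ₗ[Λ] N,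
      f ∘ₗ (b ∘ₗ a') = 0 ∧ (b' ∘ₗ a) ∘ₗ f = 0 ∧
      (((g : E ≃ₗ[Λ] E)) : E →ₗ[Λ] E) = LinearMap.id + a ∘ₗ f ∘ₗ b) →
      g ∈ Φ.ker := by
    rintro g ⟨f, hf1, hf2, hf⟩
    obtain ⟨h2, h1⟩ := hVofKer f hf1 hf2 g.1 hf
    rw [MonoidHom.mem_ker, hΦ]
    exact hφuniq g 1 h2 h1
  refine ⟨Φ, hφ, ?_, ?_, ?_⟩
  -- image = Stab
  · apply Set.eq_of_subset_of_subset
    · rintro p ⟨g, rfl⟩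
      exact ⟨g.1, ((hmem g.1).mp g.2).1, (hφ g).1, (hφ g).2⟩
    · rintro p ⟨g, hf, h2, h1⟩
      have hgH : g ∈ H := (hmem g).mpr ⟨hf, p.1, p.2, h2, h1⟩
      exact ⟨⟨g, hgH⟩, hφuniq ⟨g, hgH⟩ p h2 h1⟩
  -- kernel description
  · apply Set.ext
    intro g
    exact ⟨hkerfwd g, hkerbwd g⟩
  -- the bijection with Hom(coker, ker)
  · -- from a hom h to a linear map M →ₗ N
    let F : ((M ⧸ LinearMap.range (b ∘ₗ a')) →ₗ[Λ] ↥(LinearMap.ker (b' ∘ₗ a))) →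
        (M →ₗ[Λ] N) := fun h =>
      (LinearMap.ker (b' ∘ₗ a)).subtype ∘ₗ h ∘ₗ (LinearMap.range (b ∘ₗ a')).mkQ
    have hF1 : ∀ h, (F h) ∘ₗ (b ∘ₗ a') = 0 := by
      intro h
      apply LinearMap.ext; intro y
      have hz : (LinearMap.range (b ∘ₗ a')).mkQ ((b ∘ₗ a') y) = 0 := by
        rw [Submodule.mkQ_apply, Submodule.Quotient.mk_eq_zero]
        exact LinearMap.mem_range_self _ y
      simp only [LinearMap.comp_apply, LinearMap.zero_apply, F]
      rw [show (b ∘ₗ a') y = b (a' y) from rfl] at hz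
      rw [hz]
      simp
    have hF2 : ∀ h, (b' ∘ₗ a) ∘ₗ (F h) = 0 := by
      intro h
      apply LinearMap.ext; intro m
      have h5 := (h ((LinearMap.range (b ∘ₗ a')).mkQ m)).2
      rw [LinearMap.mem_ker, LinearMap.comp_apply] at h5
      simp only [LinearMap.comp_apply, LinearMap.zero_apply, F, Submodule.coe_subtype]
      exact h5
    have hmemH : ∀ h, gE (F h) ∈ H := by
      intro h
      obtain ⟨h2, h1⟩ := hVofKer (F h) (hF1 h) (hF2 h) (gE (F h)) (hgE (F h))
      exact ⟨⟨F h, hgE (F h)⟩, 1, 1, h2, h1⟩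
    let eto : ((M ⧸ LinearMap.range (b ∘ₗ a')) →ₗ[Λ] ↥(LinearMap.ker (b' ∘ₗ a))) →
        Φ.ker := fun h =>
      ⟨⟨gE (F h), hmemH h⟩, hkerbwd _ ⟨F h, hF1 h, hF2 h, hgE (F h)⟩⟩
    -- inverse direction
    have hmemker : ∀ (g : Φ.ker) (f : M →ₗ[Λ] N), (b' ∘ₗ a) ∘ₗ f = 0 →
        ∀ m : M, f m ∈ LinearMap.ker (b' ∘ₗ a) := by
      intro g f hf2 m
      rw [LinearMap.mem_ker]
      exact LinearMap.congr_fun hf2 m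
    let einv : Φ.ker →
        ((M ⧸ LinearMap.range (b ∘ₗ a')) →ₗ[Λ] ↥(LinearMap.ker (b' ∘ₗ a))) := fun g =>
      Submodule.liftQ _
        (LinearMap.codRestrict _ (hkerfwd g.1 g.2).choose
          (hmemker g _ (hkerfwd g.1 g.2).choose_spec.2.1))
        (by
          rintro m ⟨y, rfl⟩
          rw [LinearMap.mem_ker]
          apply Subtype.ext
          have := LinearMap.congr_fun (hkerfwd g.1 g.2).choose_spec.1 y
          simpa using this)
    have heinv : ∀ (g : Φ.ker) (m : M),
        ((einv g (Submodule.Quotient.mk m)) : N) = (hkerfwd g.1 g.2).choose m :=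
      fun g m => rfl
    have hFeinv : ∀ g : Φ.ker, F (einv g) = (hkerfwd g.1 g.2).choose := by
      intro g
      apply LinearMap.ext; intro m
      simp only [F, LinearMap.comp_apply, Submodule.mkQ_apply, Submodule.coe_subtype]
      exact heinv g m
    refine ⟨{ toFun := eto, invFun := einv, left_inv := ?_, right_inv := ?_ }, ?_⟩
    · intro h
      have hfe : (hkerfwd (eto h).1 (eto h).2).choose = F h := by
        apply hcancel
        rw [← (hkerfwd (eto h).1 (eto h).2).choose_spec.2.2, hgE (F h)]
      apply LinearMap.ext; intro q
      obtain ⟨m, rfl⟩ := Submodule.Quotient.mk_surjective _ q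
      apply Subtype.ext
      rw [heinv (eto h) m, hfe]
      rfl
    · intro g
      apply Subtype.ext
      apply Subtype.ext
      apply LinearEquiv.toLinearMap_injective
      rw [show (((eto (einv g) : Φ.ker) : H) : E ≃ₗ[Λ] E) = gE (F (einv g)) from rfl,
        hgE, hFeinv g, ← (hkerfwd g.1 g.2).choose_spec.2.2]
    · intro h x
      rfl
end
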